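/- Let r, r' ≥ 0, let v > 0 > w be reals, and let x, y, x̂, ŷ ∈ ℝ satisfy x + r + r' ≤ y and x̂ + r + r' ≤ ŷ. Set Δ := y − x − r − r' and Δ̂ := ŷ − x̂ − r − r', and assume v − w > min{Δ, Δ̂}. Define the updated positions: if v − w > Δ then x₁ := x + Δ·v/(v − w) and y₁ := y + Δ·w/(v − w), otherwise x₁ := x + v and y₁ := y + w; define x̂₁, ŷ₁ analogously using Δ̂ in place of Δ. Set s := x − x̂, S := y − ŷ, s' := x₁ − x̂₁, S' := y₁ − ŷ₁. Then min{s, S} ≤ s' ≤ max{s, S} and min{s, S} ≤ S' ≤ max{s, S}, and moreover if s ≠ S then |s' − S'| < |s − S|. -/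

import Mathlib

private lemma convex_mem (s S t : ℝ) (h0 : 0 ≤ t) (h1 : t ≤ 1) :
    min s S ≤ s + t * (S - s) ∧ s + t * (S - s) ≤ max s S := by
  rcases le_total s S with h | h
  · rw [min_eq_left h, max_eq_right h]
    constructor <;> nlinarith
  · rw [min_eq_right h, max_eq_left h]
    constructor <;> nlinarith

/-- **Interlacing of spins for mutual conflicts** (inside the proof of Theorem 2
of the paper).  Two statically coupled copies of a pair of neighbouring
particles move towards each other (left with velocity `v > 0`, right with
velocity `w < 0`); the natural resolution of a mutual conflict lets each
particle move with its own velocity for the fraction `Δ / (v - w)` of the time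
step.  Then the new spins `s', S'` interlace the old spins `s, S`, and if
`s ≠ S` then `|s' - S'| < |s - S|`. -/
theorem spin_interlacing_mutual_conflict
    (r r' v w x y xh yh Δ Δh x₁ y₁ xh₁ yh₁ s S s' S' : ℝ)
    (hr : 0 ≤ r) (hr' : 0 ≤ r') (hv : 0 < v) (hw : w < 0)
    (hadm : x + r + r' ≤ y) (hadmh : xh + r + r' ≤ yh)
    (hΔ : Δ = y - x - r - r') (hΔh : Δh = yh - xh - r - r')
    (hconf : v - w > min Δ Δh)
    (hx₁ : x₁ = if v - w > Δ then x + Δ * v / (v - w) else x + v)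
    (hy₁ : y₁ = if v - w > Δ then y + Δ * w / (v - w) else y + w)
    (hxh₁ : xh₁ = if v - w > Δh then xh + Δh * v / (v - w) else xh + v)
    (hyh₁ : yh₁ = if v - w > Δh then yh + Δh * w / (v - w) else yh + w)
    (hs : s = x - xh) (hS : S = y - yh)
    (hs' : s' = x₁ - xh₁) (hS' : S' = y₁ - yh₁) :
    (min s S ≤ s' ∧ s' ≤ max s S) ∧
    (min s S ≤ S' ∧ S' ≤ max s S) ∧
    (s ≠ S → |s' - S'| < |s - S|) := by
  have hd : 0 < v - w := by linarith
  obtain ⟨a, rfl⟩ : ∃ a, Δ = a * (v - w) :=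
    ⟨Δ / (v - w), (div_mul_cancel₀ Δ hd.ne').symm⟩
  obtain ⟨b, rfl⟩ : ∃ b, Δh = b * (v - w) :=
    ⟨Δh / (v - w), (div_mul_cancel₀ Δh hd.ne').symm⟩
  have ha0 : 0 ≤ a := by nlinarith
  have hb0 : 0 ≤ b := by nlinarith
  have e1 : a * (v - w) * v / (v - w) = a * v := by field_simp
  have e2 : a * (v - w) * w / (v - w) = a * w := by field_simp
  have e3 : b * (v - w) * v / (v - w) = b * v := by field_simp
  have e4 : b * (v - w) * w / (v - w) = b * w := by field_simp
  rw [e1] at hx₁; rw [e2] at hy₁; rw [e3] at hxh₁; rw [e4] at hyh₁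
  subst hx₁ hy₁ hxh₁ hyh₁ hs hS hs' hS'
  have key : (a - b) * (v - w) = (y - yh) - (x - xh) := by linarith
  split_ifs with h1 h2 h2
  · -- both pairs in mutual conflict: the two copies meet at the same point
    have ht0 : 0 ≤ v / (v - w) := div_nonneg hv.le hd.le
    have ht1 : v / (v - w) ≤ 1 := (div_le_one hd).mpr (by linarith)
    have Es : x + a * v - (xh + b * v)
        = (x - xh) + (v / (v - w)) * ((y - yh) - (x - xh)) := by
      rw [← key]; field_simp; ring
    have hzero : (x + a * v - (xh + b * v)) - (y + a * w - (yh + b * w)) = 0 := by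
      linarith
    have hmem := convex_mem (x - xh) (y - yh) (v / (v - w)) ht0 ht1
    rw [← Es] at hmem
    refine ⟨hmem, ?_, ?_⟩
    · have : y + a * w - (yh + b * w) = x + a * v - (xh + b * v) := by linarith
      rw [this]; exact hmem
    · intro hne
      have : (x + a * v - (xh + b * v)) - (y + a * w - (yh + b * w)) = 0 := hzero
      rw [this, abs_zero]
      exact abs_pos.mpr (sub_ne_zero.mpr hne)
  · -- first pair in conflict, second not: Δh ≥ v - w
    have ha1 : a < 1 := by
      have := (mul_lt_mul_iff_of_pos_right hd).mp (by linarith : a * (v - w) < 1 * (v - w))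
      linarith
    have hb1 : 1 ≤ b := by
      have := (mul_le_mul_iff_of_pos_right hd).mp (by linarith : 1 * (v - w) ≤ b * (v - w))
      linarith
    have hba : 0 ≤ (b - a) * (v - w) :=
      mul_nonneg (by linarith) hd.le
    have hb1d : 0 ≤ (b - 1) * (v - w) :=
      mul_nonneg (by linarith) hd.le
    have ha1w : 0 ≤ (1 - a) * (-w) :=
      mul_nonneg (by linarith) (by linarith)
    have ha1v : 0 ≤ (1 - a) * v :=
      mul_nonneg (by linarith) hv.le
    have ha1d : 0 < (1 - a) * (v - w) :=
      mul_pos (by linarith) hd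
    have hSs : y - yh ≤ x - xh := by linarith [key, hba]
    rw [min_eq_right hSs, max_eq_left hSs]
    refine ⟨⟨by linarith [key, hb1d, ha1w], by linarith [ha1v]⟩,
      ⟨by linarith [ha1w], by linarith [key, hb1d, ha1v]⟩, ?_⟩
    intro _
    have hgap : 0 < (x - xh) - (y - yh) := by linarith [key, hb1d, ha1d]
    have h1' : 0 ≤ (x + a * v - (xh + v)) - (y + a * w - (yh + w)) := by
      linarith [key, hb1d]
    rw [abs_of_nonneg h1', abs_of_pos hgap]
    linarith [ha1d]
  · -- second pair in conflict, first not: Δ ≥ v - w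
    have hb1 : b < 1 := by
      have := (mul_lt_mul_iff_of_pos_right hd).mp (by linarith : b * (v - w) < 1 * (v - w))
      linarith
    have ha1 : 1 ≤ a := by
      have := (mul_le_mul_iff_of_pos_right hd).mp (by linarith : 1 * (v - w) ≤ a * (v - w))
      linarith
    have hab : 0 ≤ (a - b) * (v - w) :=
      mul_nonneg (by linarith) hd.le
    have ha1d : 0 ≤ (a - 1) * (v - w) :=
      mul_nonneg (by linarith) hd.le
    have hb1w : 0 ≤ (1 - b) * (-w) :=
      mul_nonneg (by linarith) (by linarith)
    have hb1v : 0 ≤ (1 - b) * v :=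
      mul_nonneg (by linarith) hv.le
    have hb1d : 0 < (1 - b) * (v - w) :=
      mul_pos (by linarith) hd
    have hSs : x - xh ≤ y - yh := by linarith [key, hab]
    rw [min_eq_left hSs, max_eq_right hSs]
    refine ⟨⟨by linarith [hb1v], by linarith [key, ha1d, hb1w]⟩,
      ⟨by linarith [key, ha1d, hb1v], by linarith [hb1w]⟩, ?_⟩
    intro _
    have hgap : 0 < (y - yh) - (x - xh) := by linarith [key, ha1d, hb1d]
    have h1' : (x + v - (xh + b * v)) - (y + w - (yh + b * w)) ≤ 0 := by
      linarith [key, ha1d]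
    rw [abs_of_nonpos h1', abs_of_nonpos (by linarith : x - xh - (y - yh) ≤ 0)]
    linarith [hb1d]
  · exact absurd hconf (by push_neg; exact le_min (not_lt.mp h1) (not_lt.mp h2))
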